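/- Let 1 < l₁ < l₂ be real numbers, let k be a positive integer, and let x be a real number with l₁^{−(k+1)} ≤ x ≤ l₁^{−k}. Then the number of positive integers m such that l₁ ≤ x^{−1/m} ≤ l₂ is at most k·(1 − log l₁ / log l₂) + 2. -/

import Mathlib

/-- For `1 < l₁ < l₂`, a positive integer `k`, and `x ∈ [l₁^{−(k+1)}, l₁^{−k}]`, the set of
positive integers `m` with `l₁ ≤ x^{−1/m} ≤ l₂` is finite and has at most
`k·(1 − log l₁ / log l₂) + 2` elements. -/
theorem statement_16 (l₁ l₂ : ℝ) (h1 : 1 < l₁) (h12 : l₁ < l₂) (k : ℕ) (hk : 0 < k)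
    (x : ℝ) (hx1 : l₁^(-((k:ℤ)+1)) ≤ x) (hx2 : x ≤ l₁^(-(k:ℤ))) :
    {m : ℕ | 0 < m ∧ l₁ ≤ x ^ (-(1:ℝ)/(m:ℝ)) ∧ x ^ (-(1:ℝ)/(m:ℝ)) ≤ l₂}.Finite ∧
    (({m : ℕ | 0 < m ∧ l₁ ≤ x ^ (-(1:ℝ)/(m:ℝ)) ∧ x ^ (-(1:ℝ)/(m:ℝ)) ≤ l₂}.ncard : ℝ)
      ≤ k * (1 - Real.log l₁ / Real.log l₂) + 2) := by
  have hl1pos : (0:ℝ) < l₁ := by linarith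
  have hlog1 : 0 < Real.log l₁ := Real.log_pos h1
  have hlog2 : 0 < Real.log l₂ := Real.log_pos (h1.trans h12)
  have hlog12 : Real.log l₁ < Real.log l₂ := Real.log_lt_log hl1pos h12
  have hx0 : 0 < x := lt_of_lt_of_le (zpow_pos hl1pos _) hx1
  set L : ℝ := -Real.log x with hLdef
  have hL2 : L ≤ (k + 1) * Real.log l₁ := by
    have := Real.log_le_log (zpow_pos hl1pos _) hx1
    rw [Real.log_zpow] at this
    push_cast at this ⊢
    rw [hLdef]; linarith
  have hL1 : (k : ℝ) * Real.log l₁ ≤ L := by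
    have := Real.log_le_log hx0 hx2
    rw [Real.log_zpow] at this
    push_cast at this ⊢
    rw [hLdef]; linarith
  have hLpos : 0 < L := lt_of_lt_of_le (by positivity) hL1
  set A : ℝ := L / Real.log l₂ with hA
  set B : ℝ := L / Real.log l₁ with hB
  have hApos : 0 < A := by positivity
  -- membership characterization
  have hmem : ∀ m : ℕ, (0 < m ∧ l₁ ≤ x ^ (-(1:ℝ)/(m:ℝ)) ∧ x ^ (-(1:ℝ)/(m:ℝ)) ≤ l₂)
      ↔ (0 < m ∧ A ≤ m ∧ (m : ℝ) ≤ B) := by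
    intro m
    constructor
    · rintro ⟨hm, h₁, h₂⟩
      have hm' : (0:ℝ) < m := by exact_mod_cast hm
      have hr : x ^ (-(1:ℝ)/(m:ℝ)) = Real.exp (L / m) := by
        rw [Real.rpow_def_of_pos hx0]
        congr 1
        field_simp [hLdef]
        exact hLdef.symm
      rw [hr] at h₁ h₂
      have h₁' : Real.log l₁ ≤ L / m := by
        have := Real.exp_log hl1pos ▸ h₁
        rwa [Real.log_le_iff_le_exp hl1pos]
      have h₂' : L / m ≤ Real.log l₂ := by
        have := Real.log_le_log (Real.exp_pos _) h₂
        rwa [Real.log_exp] at this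
      refine ⟨hm, ?_, ?_⟩
      · rw [hA, div_le_iff₀ hlog2]
        rw [div_le_iff₀ hm'] at h₂'
        linarith [mul_comm (L / m * m) 1]
      · rw [hB, le_div_iff₀ hlog1]
        rw [le_div_iff₀ hm'] at h₁'
        linarith
    · rintro ⟨hm, h₁, h₂⟩
      have hm' : (0:ℝ) < m := by exact_mod_cast hm
      have hr : x ^ (-(1:ℝ)/(m:ℝ)) = Real.exp (L / m) := by
        rw [Real.rpow_def_of_pos hx0]
        congr 1
        field_simp [hLdef]
        exact hLdef.symm
      rw [hr]
      refine ⟨hm, ?_, ?_⟩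
      · rw [← Real.log_le_iff_le_exp hl1pos]
        rw [le_div_iff₀ hm']
        rw [hB, le_div_iff₀ hlog1] at h₂
        linarith
      · calc Real.exp (L / m) ≤ Real.exp (Real.log l₂) := by
              apply Real.exp_le_exp.mpr
              rw [div_le_iff₀ hm']
              rw [hA, div_le_iff₀ hlog2] at h₁
              linarith
          _ = l₂ := Real.exp_log (by linarith)
  have hsub : {m : ℕ | 0 < m ∧ l₁ ≤ x ^ (-(1:ℝ)/(m:ℝ)) ∧ x ^ (-(1:ℝ)/(m:ℝ)) ≤ l₂}
      ⊆ Set.Icc ⌈A⌉₊ ⌊B⌋₊ := by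
    intro m hm
    rw [Set.mem_setOf_eq, hmem m] at hm
    exact ⟨Nat.ceil_le.mpr hm.2.1, Nat.le_floor hm.2.2⟩
  have hfin : ({m : ℕ | 0 < m ∧ l₁ ≤ x ^ (-(1:ℝ)/(m:ℝ)) ∧ x ^ (-(1:ℝ)/(m:ℝ)) ≤ l₂}).Finite :=
    (Set.finite_Icc _ _).subset hsub
  refine ⟨hfin, ?_⟩
  have hcard : {m : ℕ | 0 < m ∧ l₁ ≤ x ^ (-(1:ℝ)/(m:ℝ)) ∧ x ^ (-(1:ℝ)/(m:ℝ)) ≤ l₂}.ncard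
      ≤ ⌊B⌋₊ + 1 - ⌈A⌉₊ := by
    calc _ ≤ (Set.Icc ⌈A⌉₊ ⌊B⌋₊).ncard := Set.ncard_le_ncard hsub (Set.finite_Icc _ _)
      _ = ⌊B⌋₊ + 1 - ⌈A⌉₊ := by
          rw [← Finset.coe_Icc, Set.ncard_coe_finset, Nat.card_Icc]
  have hr0 : 0 ≤ Real.log l₁ / Real.log l₂ := by positivity
  have hr1 : Real.log l₁ / Real.log l₂ ≤ 1 := by
    rw [div_le_one hlog2]; linarith
  have hBA : B - A + 1 ≤ (k : ℝ) * (1 - Real.log l₁ / Real.log l₂) + 2 := by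
    have key : B - A ≤ ((k:ℝ) + 1) * (1 - Real.log l₁ / Real.log l₂) := by
      rw [hA, hB]
      rw [div_sub_div _ _ (ne_of_gt hlog1) (ne_of_gt hlog2)]
      rw [div_le_iff₀ (by positivity)]
      have h' : 1 - Real.log l₁ / Real.log l₂ = (Real.log l₂ - Real.log l₁) / Real.log l₂ := by
        field_simp
      rw [h']
      have e : ((k:ℝ)+1) * ((Real.log l₂ - Real.log l₁)/Real.log l₂) * (Real.log l₁ * Real.log l₂)
          = ((k:ℝ)+1) * Real.log l₁ * (Real.log l₂ - Real.log l₁) := by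
        field_simp
      rw [e]
      nlinarith [mul_le_mul_of_nonneg_right hL2 (by linarith : (0:ℝ) ≤ Real.log l₂ - Real.log l₁)]
    nlinarith
  rcases le_or_gt ⌈A⌉₊ (⌊B⌋₊ + 1) with h | h
  · have : ((⌊B⌋₊ + 1 - ⌈A⌉₊ : ℕ) : ℝ) = (⌊B⌋₊ : ℝ) + 1 - ⌈A⌉₊ := by
      push_cast [Nat.cast_sub h]; ring
    calc ({m : ℕ | 0 < m ∧ l₁ ≤ x ^ (-(1:ℝ)/(m:ℝ)) ∧ x ^ (-(1:ℝ)/(m:ℝ)) ≤ l₂}.ncard : ℝ)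
        ≤ ((⌊B⌋₊ + 1 - ⌈A⌉₊ : ℕ) : ℝ) := by exact_mod_cast hcard
      _ = (⌊B⌋₊ : ℝ) + 1 - ⌈A⌉₊ := this
      _ ≤ B + 1 - A := by
          have h1' : (⌊B⌋₊ : ℝ) ≤ B := Nat.floor_le (by positivity)
          have h2' : A ≤ (⌈A⌉₊ : ℝ) := Nat.le_ceil A
          linarith
      _ ≤ (k : ℝ) * (1 - Real.log l₁ / Real.log l₂) + 2 := by linarith
  · have hz : ⌊B⌋₊ + 1 - ⌈A⌉₊ = 0 := Nat.sub_eq_zero_of_le h.le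
    have : {m : ℕ | 0 < m ∧ l₁ ≤ x ^ (-(1:ℝ)/(m:ℝ)) ∧ x ^ (-(1:ℝ)/(m:ℝ)) ≤ l₂}.ncard = 0 := by
      omega
    rw [this]
    have : (0:ℝ) ≤ (k : ℝ) * (1 - Real.log l₁ / Real.log l₂) := by
      apply mul_nonneg (by positivity); linarith
    push_cast
    linarith
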